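/- Rank bound in Proposition 2: let P ≥ 1 and let ω₁,…,ω_P ∈ ℂ satisfy S + ω_p·D_{n'} ≠ 0 for all p and all n' ∈ Fin N. Form the N²×P matrix Ā whose p-th column is the concatenation over n' ∈ Fin N of the blocks v^{(n')}(ω_p) (with v^{(n')}(ω)_i = (S + ω·D_i)/(S + ω·D_{n'}) − Y_i/Y_{n'}), and form the vectors d1(0) and d2(0,0) in ℂ^{N²} as the concatenations over n' of the blocks with entries (D_{n'} − D_i)/Y_{n'}² and 2(D_i − D_{n'})/Y_{n'}³, respectively. Then every column of Ā, as well as d1(0) and d2(0,0), lies in the subspace V ⊆ ℂ^{N²} of vectors whose n'-th block is a complex multiple of u_{n'} = (D_{n'} − D_i)_{i ∈ Fin N}; since dim V ≤ N, the rank of the augmented matrix [Ā, d1(0), d2(0,0)] is at most N. -/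

import Mathlib

/-- Entry `i` of the D-CSIR block `v^{(n')}(ω)`. -/
noncomputable def vblock {N : ℕ} (S : ℂ) (D : Fin N → ℂ) (ω : ℂ) (n' i : Fin N) : ℂ :=
  (S + ω * D i) / (S + ω * D n') - (S + D i) / (S + D n')

/-- The `N² × P` matrix `Ā` whose `p`-th column concatenates the blocks `v^{(n')}(ω_p)`. -/
noncomputable def AbarMat {N P : ℕ} (S : ℂ) (D : Fin N → ℂ) (ω : Fin P → ℂ) :
    Matrix (Fin N × Fin N) (Fin P) ℂ :=
  fun r p => vblock S D (ω p) r.1 r.2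

/-- First-order AoA basis vector at `φ = 0`, with entries `(D_{n'} − D_i)/Y_{n'}²`. -/
noncomputable def d1vec {N : ℕ} (S : ℂ) (D : Fin N → ℂ) : Fin N × Fin N → ℂ :=
  fun r => (D r.1 - D r.2) / (S + D r.1) ^ 2

/-- Second-order AoA basis vector at `φ = 0`, with entries `2(D_i − D_{n'})/Y_{n'}³`. -/
noncomputable def d2vec {N : ℕ} (S : ℂ) (D : Fin N → ℂ) : Fin N × Fin N → ℂ :=
  fun r => 2 * (D r.2 - D r.1) / (S + D r.1) ^ 3

/-- The augmented matrix `[Ā, d1(0), d2(0,0)]`. -/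
noncomputable def augMat {N P : ℕ} (S : ℂ) (D : Fin N → ℂ) (ω : Fin P → ℂ) :
    Matrix (Fin N × Fin N) (Fin P ⊕ Fin 2) ℂ :=
  fun r c =>
    Sum.elim (fun p => AbarMat S D ω r p)
      (fun j => if j = 0 then d1vec S D r else d2vec S D r) c


lemma vblock_eq {N : ℕ} (S : ℂ) (D : Fin N → ℂ) (ω : ℂ) (n' i : Fin N)
    (h1 : S + ω * D n' ≠ 0) (h2 : S + D n' ≠ 0) :
    vblock S D ω n' i
      = (S * (1 - ω) / ((S + ω * D n') * (S + D n'))) * (D n' - D i) := by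
  unfold vblock
  field_simp
  ring

/-- Rank bound in Proposition 2 -/
/- Rank bound in Proposition 2: every column of `Ā`, as well as `d1(0)` and
`d2(0,0)`, lies in the subspace of vectors whose `n'`-th block is a multiple of
`u_{n'} = (D_{n'} − D_i)_i`; consequently the rank of the augmented matrix
`[Ā, d1(0), d2(0,0)]` is at most `N`. -/
theorem aoa_manifold_rank_bound
    (N : ℕ) (hN : 1 ≤ N) (S : ℂ) (D : Fin N → ℂ)
    (hY : ∀ i, S + D i ≠ 0)
    (P : ℕ) (hP : 1 ≤ P) (ω : Fin P → ℂ)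
    (hω : ∀ p n', S + ω p * D n' ≠ 0) :
    (∀ p, ∃ a : Fin N → ℂ, ∀ n' i,
      AbarMat S D ω (n', i) p = a n' * (D n' - D i)) ∧
    (∃ a : Fin N → ℂ, ∀ n' i, d1vec S D (n', i) = a n' * (D n' - D i)) ∧
    (∃ a : Fin N → ℂ, ∀ n' i, d2vec S D (n', i) = a n' * (D n' - D i)) ∧
    (augMat S D ω).rank ≤ N := by
  have hA : ∀ p : Fin P, ∀ n' i,
      AbarMat S D ω (n', i) p
        = (S * (1 - ω p) / ((S + ω p * D n') * (S + D n'))) * (D n' - D i) := by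
    intro p n' i
    exact vblock_eq S D (ω p) n' i (hω p n') (hY n')
  have hd1 : ∀ n' i : Fin N,
      d1vec S D (n', i) = (1 / (S + D n') ^ 2) * (D n' - D i) := by
    intro n' i
    unfold d1vec
    field_simp
  have hd2 : ∀ n' i : Fin N,
      d2vec S D (n', i) = (-2 / (S + D n') ^ 3) * (D n' - D i) := by
    intro n' i
    unfold d2vec
    have := hY n'
    field_simp
    ring
  refine ⟨fun p => ⟨_, fun n' i => hA p n' i⟩, ⟨_, fun n' i => hd1 n' i⟩,
    ⟨_, fun n' i => hd2 n' i⟩, ?_⟩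
  -- factorization augMat = B * C
  set B : Matrix (Fin N × Fin N) (Fin N) ℂ :=
    fun r k => if k = r.1 then D r.1 - D r.2 else 0 with hB
  set C : Matrix (Fin N) (Fin P ⊕ Fin 2) ℂ :=
    fun k c => Sum.elim
      (fun p => S * (1 - ω p) / ((S + ω p * D k) * (S + D k)))
      (fun j => if j = 0 then 1 / (S + D k) ^ 2 else -2 / (S + D k) ^ 3) c with hC
  have hfac : augMat S D ω = B * C := by
    ext r c
    have hsum : (B * C) r c = (D r.1 - D r.2) * C r.1 c := by
      rw [Matrix.mul_apply]; simp only [hB]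
      rw [Finset.sum_eq_single r.1]
      · simp
      · intro b _ hb; simp [hb]
      · intro h; simp at h
    rw [hsum]
    cases c with
    | inl p => simp only [augMat, Sum.elim_inl, hC]
               rw [hA p r.1 r.2]; ring
    | inr j =>
        by_cases hj : j = 0
        · simp only [augMat, Sum.elim_inr, hC, if_pos hj]
          rw [hd1 r.1 r.2]; ring
        · simp only [augMat, Sum.elim_inr, hC, if_neg hj]
          rw [hd2 r.1 r.2]; ring
  calc (augMat S D ω).rank = (B * C).rank := by rw [hfac]
    _ ≤ B.rank := Matrix.rank_mul_le_left B C
    _ ≤ Fintype.card (Fin N) := Matrix.rank_le_card_width B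
    _ = N := Fintype.card_fin N
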